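/- Let G be a connected graph, X a finite set of vertices of G, and P a regular bounded k-profile of G with k ≥ |X|+1. Then there is a unique component C of G−X such that (V∖C, C∪X) ∈ P. -/

import Mathlib

/-- A separation of a graph `G`: a pair of vertex sets covering `V` with no edge
between `A ∖ B` and `B ∖ A`. -/
structure GraphSep {V : Type} (G : SimpleGraph V) where
  A : Set V
  B : Set V
  union_eq : A ∪ B = Set.univ
  no_edge : ∀ a ∈ A \ B, ∀ b ∈ B \ A, ¬ G.Adj a b

namespace GraphSep

variable {V V' : Type} {G : SimpleGraph V} {G' : SimpleGraph V'}

/-- The inverse `(B,A)` of a separation `(A,B)`. -/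
def inv (s : GraphSep G) : GraphSep G where
  A := s.B
  B := s.A
  union_eq := by rw [Set.union_comm]; exact s.union_eq
  no_edge := fun a ha b hb h => s.no_edge b hb a ha h.symm

/-- The separator `A ∩ B`. -/
def sepSet (s : GraphSep G) : Set V := s.A ∩ s.B

/-- The order `|A ∩ B|` of a separation, as an extended natural number. -/
noncomputable def order (s : GraphSep G) : ℕ∞ := (s.A ∩ s.B).encard

/-- `(A,B) ≤ (C,D)` iff `A ⊆ C` and `D ⊆ B`. -/
protected def le (s t : GraphSep G) : Prop := s.A ⊆ t.A ∧ t.B ⊆ s.B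

/-- Two separations are nested if after possibly replacing either by its inverse
they are `≤`-comparable. -/
def Nested (s t : GraphSep G) : Prop :=
  s.le t ∨ s.le t.inv ∨ s.inv.le t ∨ s.inv.le t.inv

lemma mem_A_or_B (s : GraphSep G) (x : V) : x ∈ s.A ∨ x ∈ s.B := by
  have h : x ∈ s.A ∪ s.B := by rw [s.union_eq]; exact Set.mem_univ x
  exact (Set.mem_union _ _ _).1 h

/-- The join `(A,B) ∨ (C,D) = (A ∪ C, B ∩ D)`. -/
def join (s t : GraphSep G) : GraphSep G where
  A := s.A ∪ t.A
  B := s.B ∩ t.B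
  union_eq := by
    apply Set.eq_univ_of_forall
    intro x
    rcases s.mem_A_or_B x with h1 | h1
    · exact Or.inl (Or.inl h1)
    · rcases t.mem_A_or_B x with h2 | h2
      · exact Or.inl (Or.inr h2)
      · exact Or.inr ⟨h1, h2⟩
  no_edge := by
    rintro a ⟨haA, haB⟩ b ⟨hbB, hbA⟩ hadj
    by_cases hsB : a ∈ s.B
    · have hatB : a ∉ t.B := fun h => haB ⟨hsB, h⟩
      have hatA : a ∈ t.A := (t.mem_A_or_B a).resolve_right hatB
      exact t.no_edge a ⟨hatA, hatB⟩ b ⟨hbB.2, fun h => hbA (Or.inr h)⟩ hadj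
    · have hasA : a ∈ s.A := (s.mem_A_or_B a).resolve_right hsB
      exact s.no_edge a ⟨hasA, hsB⟩ b ⟨hbB.1, fun h => hbA (Or.inl h)⟩ hadj

/-- The image of a separation under a graph isomorphism. -/
def map (φ : G ≃g G') (s : GraphSep G) : GraphSep G' where
  A := ⇑φ '' s.A
  B := ⇑φ '' s.B
  union_eq := by
    apply Set.eq_univ_of_forall
    intro y
    rcases s.mem_A_or_B (φ.symm y) with h | h
    · exact Or.inl ⟨φ.symm y, h, φ.apply_symm_apply y⟩
    · exact Or.inr ⟨φ.symm y, h, φ.apply_symm_apply y⟩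
  no_edge := by
    rintro a ⟨⟨x, hxA, rfl⟩, haB⟩ b ⟨⟨y, hyB, rfl⟩, hbA⟩ hadj
    exact s.no_edge x ⟨hxA, fun h => haB ⟨x, h, rfl⟩⟩ y ⟨hyB, fun h => hbA ⟨y, h, rfl⟩⟩
      (φ.map_adj_iff.mp hadj)

/-- The neighbourhood of a set of vertices. -/
def nbhd (G : SimpleGraph V) (X : Set V) : Set V := {v | v ∉ X ∧ ∃ x ∈ X, G.Adj v x}

/-- `w` can be reached from `v` by a walk avoiding `X`. -/
def AvoidReach (G : SimpleGraph V) (X : Set V) (v w : V) : Prop :=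
  ∃ p : G.Walk v w, ∀ u ∈ p.support, u ∉ X

/-- `C` is a (connected) component of `G − X`. -/
def IsCompOf (G : SimpleGraph V) (X C : Set V) : Prop :=
  ∃ v, v ∉ X ∧ C = {w | AvoidReach G X v w}

/-- A separation `(A,B)` is tight if each of `A ∖ B` and `B ∖ A` contains a component
of `G − (A ∩ B)` whose neighbourhood is all of `A ∩ B`. -/
def IsTight (s : GraphSep G) : Prop :=
  (∃ C, IsCompOf G s.sepSet C ∧ nbhd G C = s.sepSet ∧ C ⊆ s.A \ s.B) ∧
  (∃ C, IsCompOf G s.sepSet C ∧ nbhd G C = s.sepSet ∧ C ⊆ s.B \ s.A)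

/-- An orientation of `S_k`: it contains only separations of order `< k`, contains
at least one of `s, s⁻¹` for every separation of order `< k`, and contains both only
if they coincide. -/
def IsOrientation (k : ℕ∞) (P : Set (GraphSep G)) : Prop :=
  (∀ s ∈ P, s.order < k) ∧
  (∀ s : GraphSep G, s.order < k → (s ∈ P ∨ s.inv ∈ P)) ∧
  (∀ s ∈ P, s.inv ∈ P → s.inv = s)

/-- Consistency: no two members `r, s` with distinct underlying separations satisfy
`r⁻¹ ≤ s`. -/
def Consistent (P : Set (GraphSep G)) : Prop :=
  ∀ r ∈ P, ∀ s ∈ P, r.inv.le s → r = s ∨ r = s.inv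

/-- A `k`-profile: a consistent orientation of `S_k` satisfying the profile property. -/
def IsProfile (k : ℕ∞) (P : Set (GraphSep G)) : Prop :=
  IsOrientation k P ∧ Consistent P ∧ ∀ s ∈ P, ∀ t ∈ P, (s.join t).inv ∉ P

/-- A profile in `G` is a `k`-profile for some `k ∈ ℕ ∪ {ℵ₀}`. -/
def IsProfileIn (G : SimpleGraph V) (P : Set (GraphSep G)) : Prop := ∃ k : ℕ∞, IsProfile k P

/-- A profile is regular if it contains no separation of the form `(V, X)`. -/
def RegularP (P : Set (GraphSep G)) : Prop := ∀ s ∈ P, s.A ≠ Set.univ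

/-- A profile is bounded if it is a `k`-profile for some finite `k` and is not a subset
of any `ℵ₀`-profile. -/
def BoundedP (P : Set (GraphSep G)) : Prop :=
  (∃ k : ℕ, IsProfile (k : ℕ∞) P) ∧ ∀ Q : Set (GraphSep G), IsProfile ⊤ Q → ¬ P ⊆ Q

/-- `s` distinguishes the profiles `P` and `P'`. -/
def Distinguishes (s : GraphSep G) (P P' : Set (GraphSep G)) : Prop :=
  (s ∈ P ∧ s.inv ∈ P') ∨ (s.inv ∈ P ∧ s ∈ P')

/-- `s` distinguishes `P` and `P'` efficiently: it has minimum order among all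
separations distinguishing `P` and `P'`. -/
def EffDist (s : GraphSep G) (P P' : Set (GraphSep G)) : Prop :=
  Distinguishes s P P' ∧ ∀ t : GraphSep G, Distinguishes t P P' → s.order ≤ t.order

/-- `P` and `P'` are distinguishable: some finite-order separation distinguishes them. -/
def Distinguishable (P P' : Set (GraphSep G)) : Prop :=
  ∃ s : GraphSep G, s.order < ⊤ ∧ Distinguishes s P P'

/-- Robustness of a profile. -/
def RobustP (P : Set (GraphSep G)) : Prop :=
  ∀ s ∈ P, ∀ t : GraphSep G, t.order < ⊤ →
    (s.join t).order < s.order → (s.join t.inv).order < s.order →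
    (s.join t ∈ P ∨ s.join t.inv ∈ P)

/-- A `k`-profile is principal if for every vertex set `X` with `|X| < k` it contains
`(V ∖ C, C ∪ X)` for some component `C` of `G − X`. -/
def PrincipalP (k : ℕ∞) (P : Set (GraphSep G)) : Prop :=
  ∀ X : Set V, X.encard < k →
    ∃ C, IsCompOf G X C ∧ ∃ s ∈ P, s.A = Cᶜ ∧ s.B = C ∪ X

/-- `c` is a corner separation of `s` and `t`. -/
def IsCornerSep (s t c : GraphSep G) : Prop :=
  ∃ s' ∈ ({s, s.inv} : Set (GraphSep G)), ∃ t' ∈ ({t, t.inv} : Set (GraphSep G)),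
    c = s'.join t' ∨ c = (s'.join t').inv

/-- The set `S ⊆ V ∖ {x,y}` separates `x` from `y` in `G`. -/
def SeparatesIn (G : SimpleGraph V) (x y : V) (S : Set V) : Prop :=
  x ∉ S ∧ y ∉ S ∧ ∀ p : G.Walk x y, ∃ u ∈ p.support, u ∈ S

/-- `S` is a `⊆`-minimal `x`–`y`-separator in `G`. -/
def MinSeparator (G : SimpleGraph V) (x y : V) (S : Set V) : Prop :=
  SeparatesIn G x y S ∧ ∀ S' ⊆ S, SeparatesIn G x y S' → S' = S

/-- The separation of `G` induced by an (oriented) edge of a tree-decomposition. -/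
def InducedSep {ι : Type} (T : SimpleGraph ι) (𝒱 : ι → Set V) (x : GraphSep G) : Prop :=
  ∃ t t' : ι, T.Adj t t' ∧
    x.A = (⋃ u ∈ {u : ι | ∃ p : T.Walk u t, s(t, t') ∉ p.edges}, 𝒱 u) ∧
    x.B = (⋃ u ∈ {u : ι | ∃ p : T.Walk u t', s(t, t') ∉ p.edges}, 𝒱 u)

/-- Opposite pairs of corner separations of `s` and `t`. -/
def OppPair (s t c d : GraphSep G) : Prop :=
  (c = s.join t ∧ d = s.inv.join t.inv) ∨ (c = s.inv.join t.inv ∧ d = s.join t) ∨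
  (c = s.join t.inv ∧ d = s.inv.join t) ∨ (c = s.inv.join t ∧ d = s.join t.inv)

end GraphSep
section Stmt7Aux

open GraphSep SimpleGraph

variable {V : Type} {G : SimpleGraph V} {X : Set V}

lemma avoid_refl {v : V} (hv : v ∉ X) : AvoidReach G X v v :=
  ⟨Walk.nil, by simp [hv]⟩

lemma avoid_symm {v w : V} (h : AvoidReach G X v w) : AvoidReach G X w v := by
  obtain ⟨p, hp⟩ := h
  exact ⟨p.reverse, by simpa using hp⟩

lemma avoid_trans {v w u : V} (h : AvoidReach G X v w) (h' : AvoidReach G X w u) :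
    AvoidReach G X v u := by
  obtain ⟨p, hp⟩ := h; obtain ⟨q, hq⟩ := h'
  refine ⟨p.append q, ?_⟩
  intro x hx
  rw [Walk.support_append, List.mem_append] at hx
  rcases hx with hx | hx
  · exact hp x hx
  · exact hq x (List.mem_of_mem_tail hx)

lemma comp_not_mem_X {C : Set V} (hC : IsCompOf G X C) {w : V} (hw : w ∈ C) : w ∉ X := by
  obtain ⟨v, hv, rfl⟩ := hC
  obtain ⟨p, hp⟩ := hw
  exact hp w p.end_mem_support

lemma comp_base_mem {C : Set V} (hC : IsCompOf G X C) : C.Nonempty := by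
  obtain ⟨v, hv, rfl⟩ := hC
  exact ⟨v, avoid_refl hv⟩

lemma comp_eq_of_nonempty_inter {C D : Set V} (hC : IsCompOf G X C) (hD : IsCompOf G X D)
    (h : (C ∩ D).Nonempty) : C = D := by
  obtain ⟨v, hv, rfl⟩ := hC
  obtain ⟨v', hv', rfl⟩ := hD
  obtain ⟨w, hw, hw'⟩ := h
  ext x
  constructor
  · exact fun hx => avoid_trans hw' (avoid_trans (avoid_symm hw) hx)
  · exact fun hx => avoid_trans hw (avoid_trans (avoid_symm hw') hx)

lemma exists_comp_mem {v : V} (hv : v ∉ X) : ∃ C, IsCompOf G X C ∧ v ∈ C :=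
  ⟨_, ⟨v, hv, rfl⟩, avoid_refl hv⟩

lemma adj_mem_comp {C : Set V} (hC : IsCompOf G X C) {v w : V} (hv : v ∈ C)
    (hadj : G.Adj v w) (hw : w ∉ X) : w ∈ C := by
  obtain ⟨u, hu, rfl⟩ := hC
  refine avoid_trans hv ⟨Walk.cons hadj Walk.nil, ?_⟩
  intro x hx
  simp only [Walk.support_cons, Walk.support_nil, List.mem_cons, List.not_mem_nil] at hx
  rcases hx with rfl | hx
  · exact comp_not_mem_X ⟨u, hu, rfl⟩ hv
  · rcases hx with rfl | h
    · exact hw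
    · exact absurd h (by simp)

lemma support_avoidreach {v w : V} (p : G.Walk v w) (hp : ∀ u ∈ p.support, u ∉ X) :
    ∀ u ∈ p.support, AvoidReach G X v u := by
  induction p with
  | nil =>
    intro u hu
    simp only [Walk.support_nil, List.mem_cons, List.not_mem_nil, or_false] at hu
    subst hu
    exact avoid_refl (hp u (by simp))
  | @cons a b c h q ih =>
    intro u hu
    rw [Walk.support_cons, List.mem_cons] at hu
    rcases hu with rfl | hu
    · exact avoid_refl (hp u (by simp))
    · have hq : ∀ x ∈ q.support, x ∉ X := fun x hx => hp x (by simp [hx])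
      have h1 : AvoidReach G X b u := ih hq u hu
      have h2 : AvoidReach G X a b := by
        refine ⟨Walk.cons h Walk.nil, ?_⟩
        intro x hx
        simp only [Walk.support_cons, Walk.support_nil, List.mem_cons, List.not_mem_nil,
          or_false] at hx
        rcases hx with rfl | rfl
        · exact hp x (by simp)
        · exact hp x (by simp)
      exact avoid_trans h2 h1

/-- All support vertices of an avoiding walk from a point of a component lie in the component. -/
lemma support_subset_comp {C : Set V} (hC : IsCompOf G X C) {v w : V} (hv : v ∈ C)
    (p : G.Walk v w) (hp : ∀ u ∈ p.support, u ∉ X) : ∀ u ∈ p.support, u ∈ C := by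
  intro u hu
  obtain ⟨b, hb, rfl⟩ := hC
  exact avoid_trans hv (support_avoidreach p hp u hu)

lemma walk_side (s : GraphSep G) {a b : V} (p : G.Walk a b)
    (hp : ∀ u ∈ p.support, u ∉ s.A ∩ s.B) (ha : a ∈ s.A \ s.B) : b ∈ s.A \ s.B := by
  induction p with
  | nil => exact ha
  | @cons a c b h q ih =>
    have hc : c ∉ s.A ∩ s.B := hp c (by simp)
    have hcs : c ∈ s.A \ s.B := by
      rcases s.mem_A_or_B c with h1 | h1
      · exact ⟨h1, fun h2 => hc ⟨h1, h2⟩⟩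
      · by_cases h2 : c ∈ s.A
        · exact ⟨h2, fun h3 => hc ⟨h2, h3⟩⟩
        · exact absurd h (s.no_edge a ha c ⟨h1, h2⟩)
    exact ih (fun u hu => hp u (by simp [hu])) hcs

lemma comp_side {C : Set V} (hC : IsCompOf G X C) (s : GraphSep G)
    (hdisj : C ∩ (s.A ∩ s.B) = ∅) : C ⊆ s.A \ s.B ∨ C ⊆ s.B \ s.A := by
  obtain ⟨v, hv, hCeq⟩ := hC
  have hvC : v ∈ C := by rw [hCeq]; exact avoid_refl hv
  have hnot : ∀ x ∈ C, x ∉ s.A ∩ s.B := fun x hx h =>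
    Set.eq_empty_iff_forall_notMem.mp hdisj x ⟨hx, h⟩
  have key : ∀ (t : GraphSep G), (∀ x ∈ C, x ∉ t.A ∩ t.B) → v ∈ t.A \ t.B → C ⊆ t.A \ t.B := by
    intro t ht hvt w hw
    have hw' : AvoidReach G X v w := by rw [hCeq] at hw; exact hw
    obtain ⟨p, hp⟩ := hw'
    have hsupp : ∀ u ∈ p.support, u ∈ C := support_subset_comp ⟨v, hv, hCeq⟩ hvC p hp
    exact walk_side t p (fun u hu => ht u (hsupp u hu)) hvt
  rcases s.mem_A_or_B v with h1 | h1
  · left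
    exact key s hnot ⟨h1, fun h2 => hnot v hvC ⟨h1, h2⟩⟩
  · by_cases h2 : v ∈ s.A
    · exact (hnot v hvC ⟨h2, h1⟩).elim
    · right
      refine key s.inv ?_ ⟨h1, h2⟩
      intro x hx h
      exact hnot x hx ⟨h.2, h.1⟩

end Stmt7Aux
section Stmt7Aux2

open GraphSep SimpleGraph

variable {V : Type} {G : SimpleGraph V} {X : Set V}

/-- The separation `(Cᶜ, C ∪ X)` associated with a component `C` of `G − X`. -/
def compSep (G : SimpleGraph V) (X C : Set V) (hC : IsCompOf G X C) : GraphSep G where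
  A := Cᶜ
  B := C ∪ X
  union_eq := by
    apply Set.eq_univ_of_forall
    intro x
    by_cases h : x ∈ C
    · exact Or.inr (Or.inl h)
    · exact Or.inl h
  no_edge := by
    intro a ha b hb hadj
    have haC : a ∉ C := ha.1
    have haX : a ∉ X := fun h => ha.2 (Or.inr h)
    have hbC : b ∈ C := Set.notMem_compl_iff.mp hb.2
    exact haC (adj_mem_comp hC hbC hadj.symm haX)

lemma compSep_sepSet {C : Set V} (hC : IsCompOf G X C) :
    (compSep G X C hC).A ∩ (compSep G X C hC).B = X := by
  have hCX : ∀ x ∈ C, x ∉ X := fun x hx => comp_not_mem_X hC hx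
  ext x
  constructor
  · rintro ⟨h1, h2 | h2⟩
    · exact absurd h2 h1
    · exact h2
  · intro hx
    exact ⟨fun h => hCX x h hx, Or.inr hx⟩

variable {k : ℕ} {P : Set (GraphSep G)}

lemma join_mem_of_order_lt (hP : IsProfile (k : ℕ∞) P) {s t : GraphSep G}
    (hs : s ∈ P) (ht : t ∈ P) (h : (s.join t).order < (k : ℕ∞)) : s.join t ∈ P := by
  rcases hP.1.2.1 _ h with h1 | h1
  · exact h1
  · exact absurd h1 (hP.2.2 s hs t ht)

lemma order_lt_of_sepset_subset_X (hX : X.Finite) (hk : X.encard + 1 ≤ (k : ℕ∞))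
    {s : GraphSep G} (h : s.A ∩ s.B ⊆ X) : s.order < (k : ℕ∞) :=
  lt_of_le_of_lt (Set.encard_mono h)
    ((ENat.add_one_le_iff (Set.encard_ne_top_iff.mpr hX)).mp hk)

/-- The base separation `(X, V)` lies in every regular profile of order `> |X|`. -/
lemma base_mem (hP : IsProfile (k : ℕ∞) P) (hreg : RegularP P) (hX : X.Finite)
    (hk : X.encard + 1 ≤ (k : ℕ∞)) :
    ∃ u ∈ P, u.A = X ∧ u.B = (Set.univ : Set V) := by
  set u : GraphSep G := ⟨X, Set.univ, by simp, by simp⟩ with hu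
  have hord : u.order < (k : ℕ∞) :=
    order_lt_of_sepset_subset_X hX hk (by simp [hu])
  rcases hP.1.2.1 u hord with h | h
  · exact ⟨u, h, rfl, rfl⟩
  · exact absurd rfl (hreg u.inv h)

/-- Joining the separations `(C ∪ X, Cᶜ)` over a finite family of components. -/
lemma exists_join_comps (hP : IsProfile (k : ℕ∞) P) (hreg : RegularP P) (hX : X.Finite)
    (hk : X.encard + 1 ≤ (k : ℕ∞))
    (hall : ∀ C, IsCompOf G X C → ∃ t ∈ P, t.A = C ∪ X ∧ t.B = Cᶜ)
    (𝒟 : Set (Set V)) (h𝒟 : 𝒟.Finite) (hcomp : ∀ C ∈ 𝒟, IsCompOf G X C) :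
    ∃ u ∈ P, u.A = ⋃₀ 𝒟 ∪ X ∧ u.B = (⋃₀ 𝒟)ᶜ := by
  revert hcomp
  refine Set.Finite.induction_on
    (motive := fun 𝒟 _ => (∀ C ∈ 𝒟, IsCompOf G X C) →
      ∃ u ∈ P, u.A = ⋃₀ 𝒟 ∪ X ∧ u.B = (⋃₀ 𝒟)ᶜ) 𝒟 h𝒟 ?_ ?_
  · intro _
    obtain ⟨u, hu, hA, hB⟩ := base_mem hP hreg hX hk
    exact ⟨u, hu, by simp [hA], by simp [hB]⟩
  · intro C 𝒟' hCn h𝒟' ih hcomp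
    obtain ⟨u, hu, hA, hB⟩ := ih (fun D hD => hcomp D (Or.inr hD))
    obtain ⟨t, ht, htA, htB⟩ := hall C (hcomp C (Or.inl rfl))
    have hjA : (u.join t).A = ⋃₀ insert C 𝒟' ∪ X := by
      show u.A ∪ t.A = _
      rw [hA, htA, Set.sUnion_insert]
      ext x; constructor
      · rintro ((h | h) | (h | h))
        · exact Or.inl (Or.inr h)
        · exact Or.inr h
        · exact Or.inl (Or.inl h)
        · exact Or.inr h
      · rintro ((h | h) | h)
        · exact Or.inr (Or.inl h)
        · exact Or.inl (Or.inl h)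
        · exact Or.inl (Or.inr h)
    have hjB : (u.join t).B = (⋃₀ insert C 𝒟')ᶜ := by
      show u.B ∩ t.B = _
      rw [hB, htB, Set.sUnion_insert, Set.compl_union, Set.inter_comm]
    have hord : (u.join t).order < (k : ℕ∞) := by
      apply order_lt_of_sepset_subset_X hX hk
      show (u.join t).A ∩ (u.join t).B ⊆ X
      rw [hjA, hjB]
      rintro x ⟨h1 | h1, h2⟩
      · exact absurd h1 h2
      · exact h1
    exact ⟨u.join t, join_mem_of_order_lt hP hu ht hord, hjA, hjB⟩

lemma sepSet_finite (hP : IsProfile (k : ℕ∞) P) {s : GraphSep G} (hs : s ∈ P) :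
    (s.A ∩ s.B).Finite := by
  have := hP.1.1 s hs
  have h2 : s.order < ⊤ := lt_of_lt_of_le this le_top
  exact Set.encard_lt_top_iff.mp h2

/-- Finitely many components meet a given finite set. -/
lemma finite_comps_meeting {W : Set V} (hW : W.Finite) :
    {C | IsCompOf G X C ∧ (C ∩ W).Nonempty}.Finite := by
  classical
  set f : Set V → Option V := fun C => if h : (C ∩ W).Nonempty then some h.choose else none
    with hf
  have himg : f '' {C | IsCompOf G X C ∧ (C ∩ W).Nonempty} ⊆ some '' W := by
    rintro x ⟨C, ⟨hC, hCW⟩, rfl⟩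
    simp only [hf, dif_pos hCW]
    exact ⟨_, hCW.choose_spec.2, rfl⟩
  refine Set.Finite.of_finite_image (((hW.image some).subset himg)) ?_
  rintro C ⟨hC, hCW⟩ D ⟨hD, hDW⟩ hfeq
  simp only [hf, dif_pos hCW, dif_pos hDW, Option.some.injEq] at hfeq
  apply comp_eq_of_nonempty_inter hC hD
  exact ⟨hCW.choose, hCW.choose_spec.1, hfeq ▸ hDW.choose_spec.1⟩

end Stmt7Aux2
section Stmt7Aux3

open GraphSep SimpleGraph

variable {V : Type} {G : SimpleGraph V} {X : Set V} {k : ℕ} {P : Set (GraphSep G)}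

/-- Key lemma: if the profile points away from every component of `G − X`, then for
any finite set `S ⊆ P` there are infinitely many components lying strictly on the
`B`-side of every member of `S`. -/
lemma fip (hP : IsProfile (k : ℕ∞) P) (hreg : RegularP P) (hX : X.Finite)
    (hk : X.encard + 1 ≤ (k : ℕ∞))
    (hall : ∀ C, IsCompOf G X C → ∃ t ∈ P, t.A = C ∪ X ∧ t.B = Cᶜ)
    (S : Set (GraphSep G)) (hSfin : S.Finite) (hSP : S ⊆ P) :
    {C | IsCompOf G X C ∧ ∀ s ∈ S, C ⊆ s.B \ s.A}.Infinite := by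
  by_contra hfin
  rw [Set.not_infinite] at hfin
  set H := {C | IsCompOf G X C ∧ ∀ s ∈ S, C ⊆ s.B \ s.A} with hH
  set W := ⋃ s ∈ S, s.A ∩ s.B with hW
  have hWfin : W.Finite := hSfin.biUnion (fun s hs => sepSet_finite hP (hSP hs))
  set M := {C | IsCompOf G X C ∧ (C ∩ W).Nonempty} with hM
  have hMfin : M.Finite := finite_comps_meeting hWfin
  set F := H ∪ M with hF
  have hFfin : F.Finite := hfin.union hMfin
  have hFcomp : ∀ C ∈ F, IsCompOf G X C := by
    rintro C (hC | hC) <;> exact hC.1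
  -- build the join of `u_F` with all separations in a finite subset of `S`
  have claim : ∀ S' : Set (GraphSep G), S'.Finite → S' ⊆ S →
      ∃ m ∈ P, m.A = ⋃₀ F ∪ X ∪ (⋃ s ∈ S', s.A) ∧
        m.B = (⋃₀ F)ᶜ ∩ (⋂ s ∈ S', s.B) := by
    intro S' hS'fin
    refine Set.Finite.induction_on
      (motive := fun S' _ => S' ⊆ S → ∃ m ∈ P, m.A = ⋃₀ F ∪ X ∪ (⋃ s ∈ S', s.A) ∧
        m.B = (⋃₀ F)ᶜ ∩ (⋂ s ∈ S', s.B)) S' hS'fin ?_ ?_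
    · intro _
      obtain ⟨u, hu, hA, hB⟩ := exists_join_comps hP hreg hX hk hall F hFfin hFcomp
      exact ⟨u, hu, by simp [hA], by simp [hB]⟩
    · intro s0 S'' hs0 hS''fin ih hsub
      have hs0S : s0 ∈ S := hsub (Or.inl rfl)
      obtain ⟨m, hm, hA, hB⟩ := ih (fun x hx => hsub (Or.inr hx))
      have hjA : (m.join s0).A = ⋃₀ F ∪ X ∪ (⋃ s ∈ insert s0 S'', s.A) := by
        show m.A ∪ s0.A = _
        rw [hA, Set.biUnion_insert, Set.union_assoc, Set.union_comm (⋃ s ∈ S'', s.A) s0.A,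
          ← Set.union_assoc]
      have hjB : (m.join s0).B = (⋃₀ F)ᶜ ∩ (⋂ s ∈ insert s0 S'', s.B) := by
        show m.B ∩ s0.B = _
        rw [hB, Set.biInter_insert, Set.inter_assoc, Set.inter_comm (⋂ s ∈ S'', s.B) s0.B,
          ← Set.inter_assoc]
      have hord : (m.join s0).order < (k : ℕ∞) := by
        apply order_lt_of_sepset_subset_X hX hk
        show (m.join s0).A ∩ (m.join s0).B ⊆ X
        rw [hjA, hjB]
        rintro x ⟨hx1, hx2, hx3⟩
        by_contra hxX
        have hxF : x ∉ ⋃₀ F := hx2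
        have hxA : ∃ s ∈ insert s0 S'', x ∈ s.A := by
          rcases hx1 with (h | h) | h
          · exact absurd h hxF
          · exact absurd h hxX
          · simpa using h
        obtain ⟨s, hsmem, hxsA⟩ := hxA
        have hxsB : x ∈ s.B := Set.mem_iInter₂.mp hx3 s hsmem
        obtain ⟨C, hC, hxC⟩ := exists_comp_mem (G := G) hxX
        have hCM : C ∈ M := ⟨hC, ⟨x, hxC, Set.mem_biUnion (hsub hsmem) ⟨hxsA, hxsB⟩⟩⟩
        exact hxF ⟨C, Or.inr hCM, hxC⟩
      exact ⟨m.join s0, join_mem_of_order_lt hP hm (hSP hs0S) hord, hjA, hjB⟩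
  obtain ⟨m, hm, hA, hB⟩ := claim S hSfin le_rfl
  apply hreg m hm
  rw [hA]
  apply Set.eq_univ_of_forall
  intro v
  by_cases hvX : v ∈ X
  · exact Or.inl (Or.inr hvX)
  obtain ⟨C, hC, hvC⟩ := exists_comp_mem (G := G) hvX
  by_cases hCF : C ∈ F
  · exact Or.inl (Or.inl ⟨C, hCF, hvC⟩)
  have hCM : C ∉ M := fun h => hCF (Or.inr h)
  have hCH : C ∉ H := fun h => hCF (Or.inl h)
  have hdisj : ∀ s ∈ S, C ∩ (s.A ∩ s.B) = ∅ := by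
    intro s hs
    by_contra hne
    have hne' := Set.nonempty_iff_ne_empty.mpr hne
    exact hCM ⟨hC, hne'.mono (by
      intro x hx
      exact ⟨hx.1, Set.mem_biUnion hs hx.2⟩)⟩
  have : ∃ s ∈ S, ¬ C ⊆ s.B \ s.A := by
    by_contra hcon
    push_neg at hcon
    exact hCH ⟨hC, hcon⟩
  obtain ⟨s, hsS, hns⟩ := this
  rcases comp_side hC s (hdisj s hsS) with hside | hside
  · exact Or.inr (Set.mem_biUnion hsS (hside hvC).1)
  · exact absurd hside hns

end Stmt7Aux3
section Stmt7Aux4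

open GraphSep SimpleGraph

variable {V : Type} {G : SimpleGraph V} {X : Set V} {k : ℕ} {P : Set (GraphSep G)}

/-- The set of components lying strictly on the `B`-side of `s`. -/
def BSide (G : SimpleGraph V) (X : Set V) (s : GraphSep G) : Set (Set V) :=
  {C | IsCompOf G X C ∧ C ⊆ s.B \ s.A}

lemma order_inv (s : GraphSep G) : s.inv.order = s.order := by
  show (s.B ∩ s.A).encard = (s.A ∩ s.B).encard
  rw [Set.inter_comm]

/-- If a regular profile points away from every component of `G − X`, it extends to an
`ℵ₀`-profile; this contradicts boundedness. -/
lemma no_hall (hP : IsProfile (k : ℕ∞) P) (hreg : RegularP P) (hbdd : BoundedP P)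
    (hX : X.Finite) (hk : X.encard + 1 ≤ (k : ℕ∞))
    (hall : ∀ C, IsCompOf G X C → ∃ t ∈ P, t.A = C ∪ X ∧ t.B = Cᶜ) : False := by
  classical
  set 𝒞 : Set (Set V) := {C | IsCompOf G X C} with h𝒞
  set 𝒜 : Set (Set (Set V)) :=
    {T | (∃ s ∈ P, T = BSide G X s) ∨ (∃ C ∈ 𝒞, T = {C}ᶜ) ∨ T = 𝒞} with h𝒜
  -- the generated filter is proper
  have hfip : ∀ t ⊆ 𝒜, t.Finite → (⋂₀ t).Nonempty := by
    intro t ht htfin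
    have key : ∀ u : Set (Set (Set V)), u.Finite → u ⊆ 𝒜 →
        ∃ S D, S.Finite ∧ S ⊆ P ∧ D.Finite ∧
          ({C | IsCompOf G X C ∧ ∀ s ∈ S, C ⊆ s.B \ s.A} \ D) ⊆ ⋂₀ u := by
      intro u hufin
      refine Set.Finite.induction_on
        (motive := fun u _ => u ⊆ 𝒜 → ∃ S D, S.Finite ∧ S ⊆ P ∧ D.Finite ∧
          ({C | IsCompOf G X C ∧ ∀ s ∈ S, C ⊆ s.B \ s.A} \ D) ⊆ ⋂₀ u) u hufin ?_ ?_
      · intro _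
        exact ⟨∅, ∅, Set.finite_empty, Set.empty_subset _, Set.finite_empty, by simp⟩
      · intro T u' hT hu'fin ih hsub
        obtain ⟨S, D, hSfin, hSP, hDfin, hincl⟩ := ih (fun x hx => hsub (Or.inr hx))
        rcases hsub (Or.inl rfl) with ⟨s, hsP, rfl⟩ | ⟨⟨C, hC, rfl⟩ | rfl⟩
        · refine ⟨insert s S, D, hSfin.insert s, ?_, hDfin, ?_⟩
          · exact Set.insert_subset hsP hSP
          · rw [Set.sInter_insert]
            rintro C ⟨⟨hC1, hC2⟩, hC3⟩
            refine ⟨⟨hC1, hC2 s (Or.inl rfl)⟩, hincl ⟨⟨hC1, fun s' hs' => hC2 s' (Or.inr hs')⟩, hC3⟩⟩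
        · refine ⟨S, insert C D, hSfin, hSP, hDfin.insert C, ?_⟩
          rw [Set.sInter_insert]
          rintro C' ⟨hC1, hC2⟩
          exact ⟨fun h => hC2 (Or.inl h), hincl ⟨hC1, fun h => hC2 (Or.inr h)⟩⟩
        · refine ⟨S, D, hSfin, hSP, hDfin, ?_⟩
          rw [Set.sInter_insert]
          rintro C ⟨hC1, hC2⟩
          exact ⟨hC1.1, hincl ⟨hC1, hC2⟩⟩
    obtain ⟨S, D, hSfin, hSP, hDfin, hincl⟩ := key t htfin ht
    have hinf := (fip hP hreg hX hk hall S hSfin hSP).diff hDfin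
    exact hinf.nonempty.mono hincl
  have hNeBot : (Filter.generate 𝒜).NeBot := Filter.generate_neBot_iff.mpr hfip
  set U : Ultrafilter (Set V) := @Ultrafilter.of _ _ hNeBot with hU
  have hUmem : ∀ T ∈ 𝒜, T ∈ U := fun T hT =>
    (@Ultrafilter.of_le _ _ hNeBot) (Filter.mem_generate_of_mem hT)
  have h𝒞U : 𝒞 ∈ U := hUmem 𝒞 (Or.inr (Or.inr rfl))
  have hBU : ∀ s ∈ P, BSide G X s ∈ U := fun s hs => hUmem _ (Or.inl ⟨s, hs, rfl⟩)
  have hdiffU : ∀ D : Set (Set V), D ⊆ 𝒞 → D.Finite → 𝒞 \ D ∈ U := by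
    intro D hD𝒞 hDfin
    have heq : 𝒞 \ D = 𝒞 ∩ ⋂ C ∈ D, {C}ᶜ := by
      ext x
      simp only [Set.mem_diff, Set.mem_inter_iff, Set.mem_iInter, Set.mem_compl_iff,
        Set.mem_singleton_iff]
      constructor
      · rintro ⟨h1, h2⟩; exact ⟨h1, fun C hC h => h2 (h ▸ hC)⟩
      · rintro ⟨h1, h2⟩; exact ⟨h1, fun h => h2 x h rfl⟩
    rw [heq]
    refine Filter.inter_mem h𝒞U ?_
    rw [Filter.biInter_mem hDfin]
    exact fun C hC => hUmem _ (Or.inr (Or.inl ⟨C, hD𝒞 hC, rfl⟩))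
  -- members of the ultrafilter contain a nonempty component
  have hpick : ∀ s t : GraphSep G, BSide G X s ∈ U → BSide G X t ∈ U →
      ∃ C x, IsCompOf G X C ∧ x ∈ C ∧ C ⊆ s.B \ s.A ∧ C ⊆ t.B \ t.A := by
    intro s t h1 h2
    obtain ⟨C, hC1, hC2⟩ := Ultrafilter.nonempty_of_mem (Filter.inter_mem h1 h2)
    obtain ⟨x, hx⟩ := comp_base_mem hC1.1
    exact ⟨C, x, hC1.1, hx, hC1.2, hC2.2⟩
  set Q : Set (GraphSep G) := {s | s.order < ⊤ ∧ BSide G X s ∈ U} with hQ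
  have hQprof : IsProfile (⊤ : ℕ∞) Q := by
    refine ⟨⟨fun s hs => hs.1, ?_, ?_⟩, ?_, ?_⟩
    · -- orientation: every finite-order separation is oriented
      intro s hs
      have hsep : (s.A ∩ s.B).Finite := Set.encard_lt_top_iff.mp hs
      set M : Set (Set V) := {C | IsCompOf G X C ∧ (C ∩ (s.A ∩ s.B)).Nonempty} with hM
      have hMfin : M.Finite := finite_comps_meeting hsep
      have hsubM : 𝒞 \ M ⊆ BSide G X s ∪ BSide G X s.inv := by
        rintro C ⟨hC, hCM⟩
        have hdisj : C ∩ (s.A ∩ s.B) = ∅ := by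
          by_contra hne
          exact hCM ⟨hC, Set.nonempty_iff_ne_empty.mpr hne⟩
        rcases comp_side hC s hdisj with h | h
        · exact Or.inr ⟨hC, h⟩
        · exact Or.inl ⟨hC, h⟩
      have : BSide G X s ∪ BSide G X s.inv ∈ U :=
        Filter.mem_of_superset (hdiffU M (fun C hC => hC.1) hMfin) hsubM
      rcases Ultrafilter.union_mem_iff.mp this with h | h
      · exact Or.inl ⟨hs, h⟩
      · exact Or.inr ⟨by rw [order_inv]; exact hs, h⟩
    · -- at most one orientation
      intro s hs hinv
      obtain ⟨C, x, hC, hx, h1, h2⟩ := hpick s s.inv hs.2 hinv.2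
      exact absurd (h1 hx).1 (h2 hx).2
    · -- consistency
      intro r hr s hs hle
      obtain ⟨C, x, hC, hx, h1, h2⟩ := hpick r s hr.2 hs.2
      exact absurd (hle.1 (h1 hx).1) (h2 hx).2
    · -- profile property
      rintro s hs t ht ⟨hjo, hjB⟩
      obtain ⟨C₀, hC₀⟩ := Ultrafilter.nonempty_of_mem
        (Filter.inter_mem hs.2 (Filter.inter_mem ht.2 hjB))
      obtain ⟨x₀, hx₀⟩ := comp_base_mem hC₀.1.1
      have hbs := hC₀.1.2 hx₀
      have hbt := hC₀.2.1.2 hx₀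
      have hbj := hC₀.2.2.2 hx₀
      have hun : x₀ ∈ s.A ∪ t.A := hbj.1
      rcases hun with h | h
      · exact hbs.2 h
      · exact hbt.2 h
  have hPQ : P ⊆ Q := by
    intro s hs
    refine ⟨lt_of_lt_of_le (hP.1.1 s hs) le_top, hBU s hs⟩
  exact hbdd.2 Q hQprof hPQ

end Stmt7Aux4
open GraphSep in
/-- a regular bounded `k`-profile with `k ≥ |X|+1` points towards a
unique component of `G − X`. -/
theorem stmt7 {V : Type} (G : SimpleGraph V) (hG : G.Connected)
    (X : Set V) (hX : X.Finite)
    (k : ℕ) (P : Set (GraphSep G))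
    (hP : IsProfile (k : ℕ∞) P) (hreg : RegularP P) (hbdd : BoundedP P)
    (hk : X.encard + 1 ≤ (k : ℕ∞)) :
    ∃! C : Set V, IsCompOf G X C ∧ ∃ s ∈ P, s.A = Cᶜ ∧ s.B = C ∪ X := by
  have hXlt : X.encard < (k : ℕ∞) :=
    (ENat.add_one_le_iff (Set.encard_ne_top_iff.mpr hX)).mp hk
  have hex : ∃ C, IsCompOf G X C ∧ ∃ s ∈ P, s.A = Cᶜ ∧ s.B = C ∪ X := by
    by_contra hex
    have hall : ∀ C, IsCompOf G X C → ∃ t ∈ P, t.A = C ∪ X ∧ t.B = Cᶜ := by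
      intro C hC
      set σ := compSep G X C hC with hσ
      have hord : σ.order < (k : ℕ∞) := by
        show (σ.A ∩ σ.B).encard < _
        rw [hσ, compSep_sepSet hC]
        exact hXlt
      rcases hP.1.2.1 σ hord with h | h
      · exact absurd ⟨C, hC, σ, h, rfl, rfl⟩ hex
      · exact ⟨σ.inv, h, rfl, rfl⟩
    exact no_hall hP hreg hbdd hX hk hall
  obtain ⟨C, hC, s, hsP, hsA, hsB⟩ := hex
  refine ⟨C, ⟨hC, s, hsP, hsA, hsB⟩, ?_⟩
  rintro D ⟨hD, t, htP, htA, htB⟩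
  by_contra hne
  have hdisj : D ∩ C = ∅ := by
    by_contra h
    exact hne (comp_eq_of_nonempty_inter hD hC (Set.nonempty_iff_ne_empty.mpr h))
  have hjA : (t.join s).A = Set.univ := by
    show t.A ∪ s.A = _
    rw [htA, hsA]
    apply Set.eq_univ_of_forall
    intro x
    by_cases h : x ∈ D
    · exact Or.inr (fun hc => Set.eq_empty_iff_forall_notMem.mp hdisj x ⟨h, hc⟩)
    · exact Or.inl h
  have hord : (t.join s).order < (k : ℕ∞) := by
    apply order_lt_of_sepset_subset_X hX hk
    show (t.A ∪ s.A) ∩ (t.B ∩ s.B) ⊆ X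
    rintro x ⟨-, hx2, hx3⟩
    rw [htB] at hx2
    rw [hsB] at hx3
    rcases hx2 with h2 | h2
    · rcases hx3 with h3 | h3
      · exact (Set.eq_empty_iff_forall_notMem.mp hdisj x ⟨h2, h3⟩).elim
      · exact h3
    · exact h2
  exact hreg _ (join_mem_of_order_lt hP htP hsP hord) hjA
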